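/- Let t ≥ 1, q ≥ 1 be fixed, and let Φ_N : R^{N×tq} → R^{q×q} be a sequence of uniformly pseudo-Lipschitz functions of order k. Let κ be a tq×tq covariance matrix and Z_κ ~ N(0, κ ⊗ I_N). Then the map κ ↦ sup_{N≥1} ‖E[Φ_N(Z_κ)] − E[Φ_N(Z_{κ'})]‖ tends to 0 as κ' → κ; i.e., lim_{κ'→κ} sup_{N≥1} ‖E[Φ_N(Z_κ)] − E[Φ_N(Z_{κ'})]‖ = 0. -/

import Mathlib

open MeasureTheory ProbabilityTheory

noncomputable section

/-- Frobenius norm of `X ∈ ℝ^{N×d}` (as a function array). -/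
def frobF {N d : ℕ} (X : Fin N → Fin d → ℝ) : ℝ :=
  Real.sqrt (∑ i, ∑ j, (X i j) ^ 2)

/-- Frobenius norm of a `q × q` matrix. -/
def frobM {q : ℕ} (M : Matrix (Fin q) (Fin q) ℝ) : ℝ :=
  Real.sqrt (∑ i, ∑ j, (M i j) ^ 2)

/-- A `q×q`-matrix-valued function on `ℝ^{N×d}` is pseudo-Lipschitz of order `k` with
constant `L` (Frobenius norms). -/
def PLmatVal (N d q k : ℕ) (L : ℝ)
    (Φ : (Fin N → Fin d → ℝ) → Matrix (Fin q) (Fin q) ℝ) : Prop :=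
  ∀ X Y : Fin N → Fin d → ℝ,
    frobM (Φ X - Φ Y) ≤
      L * (1 + (frobF X / Real.sqrt N) ^ (k - 1) + (frobF Y / Real.sqrt N) ^ (k - 1)) *
        (frobF (fun i j => X i j - Y i j) / Real.sqrt N)

/-- The law of an `N × d` array of i.i.d. standard Gaussians. -/
def stdGaussianMatrix (N d : ℕ) : Measure (Fin N → Fin d → ℝ) :=
  Measure.pi fun _ : Fin N => Measure.pi fun _ : Fin d => gaussianReal 0 1

/-- The positive semidefinite square root of a positive semidefinite matrix
(the definition `Matrix.PosSemidef.sqrt` of the older Mathlib, since removed). -/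
def Matrix.PosSemidef.sqrt {n : Type*} [Fintype n] [DecidableEq n]
    {A : Matrix n n ℝ} (hA : A.PosSemidef) : Matrix n n ℝ :=
  hA.1.eigenvectorUnitary.1 * Matrix.diagonal (Real.sqrt ∘ hA.1.eigenvalues) *
    (star hA.1.eigenvectorUnitary : Matrix n n ℝ)

/-- `E[Φ(Z_κ)]` where `Z_κ ~ N(0, κ ⊗ I_N)` is realized as `Z̃ κ^{1/2}` with `Z̃`
standard Gaussian and `κ^{1/2}` the positive semidefinite square root. -/
def gaussExpect {N d q : ℕ} (Φ : (Fin N → Fin d → ℝ) → Matrix (Fin q) (Fin q) ℝ)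
    {κ : Matrix (Fin d) (Fin d) ℝ} (hκ : κ.PosSemidef) : Matrix (Fin q) (Fin q) ℝ :=
  Matrix.of fun a b =>
    ∫ z, Φ (fun i j => ∑ l, z i l * hκ.sqrt l j) a b ∂(stdGaussianMatrix N d)

lemma frobF_nonneg {N d : ℕ} (X : Fin N → Fin d → ℝ) : 0 ≤ frobF X := Real.sqrt_nonneg _
lemma frobM_nonneg {q : ℕ} (M : Matrix (Fin q) (Fin q) ℝ) : 0 ≤ frobM M := Real.sqrt_nonneg _

lemma sumsq_nonneg {N d : ℕ} (X : Fin N → Fin d → ℝ) :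
    0 ≤ ∑ i, ∑ j, (X i j) ^ 2 :=
  Finset.sum_nonneg fun _ _ => Finset.sum_nonneg fun _ _ => sq_nonneg _

lemma frobF_sq {N d : ℕ} (X : Fin N → Fin d → ℝ) :
    (frobF X) ^ 2 = ∑ i, ∑ j, (X i j) ^ 2 :=
  Real.sq_sqrt (sumsq_nonneg X)

lemma abs_entry_le_frobM {q : ℕ} (M : Matrix (Fin q) (Fin q) ℝ) (a b : Fin q) :
    |M a b| ≤ frobM M := by
  rw [← Real.sqrt_sq_eq_abs]
  apply Real.sqrt_le_sqrt
  calc (M a b) ^ 2 ≤ ∑ j, (M a j) ^ 2 :=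
        Finset.single_le_sum (f := fun j => (M a j) ^ 2) (fun j _ => sq_nonneg _)
          (Finset.mem_univ b)
    _ ≤ ∑ i, ∑ j, (M i j) ^ 2 :=
        Finset.single_le_sum (f := fun i => ∑ j, (M i j) ^ 2)
          (fun i _ => Finset.sum_nonneg fun j _ => sq_nonneg _) (Finset.mem_univ a)

lemma frobM_le_of_entries {q : ℕ} (M : Matrix (Fin q) (Fin q) ℝ) {B : ℝ} (hB : 0 ≤ B)
    (h : ∀ a b, |M a b| ≤ B) : frobM M ≤ q * B := by
  have : ∑ i, ∑ j, (M i j) ^ 2 ≤ ∑ _i : Fin q, ∑ _j : Fin q, B ^ 2 := by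
    refine Finset.sum_le_sum fun i _ => Finset.sum_le_sum fun j _ => ?_
    rw [← sq_abs]
    exact pow_le_pow_left₀ (abs_nonneg _) (h i j) 2
  have h2 : frobM M ≤ Real.sqrt (∑ _i : Fin q, ∑ _j : Fin q, B ^ 2) := Real.sqrt_le_sqrt this
  refine h2.trans (le_of_eq ?_)
  simp only [Finset.sum_const, Finset.card_univ, Fintype.card_fin, nsmul_eq_mul]
  rw [show (q : ℝ) * ((q : ℝ) * B ^ 2) = (q * B) ^ 2 by ring]
  exact Real.sqrt_sq (by positivity)

lemma frobF_mul_le {N d e : ℕ} (z : Fin N → Fin d → ℝ) (A : Fin d → Fin e → ℝ) :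
    frobF (fun i j => ∑ l, z i l * A l j) ≤ frobF z * frobF A := by
  simp only [frobF]
  rw [← Real.sqrt_mul (sumsq_nonneg z)]
  apply Real.sqrt_le_sqrt
  calc ∑ i, ∑ j, (∑ l, z i l * A l j) ^ 2
      ≤ ∑ i, ∑ j, (∑ l, (z i l) ^ 2) * (∑ l, (A l j) ^ 2) := by
        refine Finset.sum_le_sum fun i _ => Finset.sum_le_sum fun j _ => ?_
        exact Finset.sum_mul_sq_le_sq_mul_sq Finset.univ _ _
    _ = (∑ i, ∑ l, (z i l) ^ 2) * (∑ l, ∑ j, (A l j) ^ 2) := by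
        simp_rw [← Finset.mul_sum, ← Finset.sum_mul]
        rw [Finset.sum_comm (f := fun (l : Fin d) (j : Fin e) => (A l j) ^ 2)]

lemma continuous_frobF {N d : ℕ} : Continuous (frobF (N := N) (d := d)) := by
  apply Real.continuous_sqrt.comp
  exact continuous_finset_sum _ fun i _ => continuous_finset_sum _ fun j _ =>
    ((continuous_apply j).comp (continuous_apply i)).pow 2

lemma PL_entry_bound {N d q k : ℕ} {L : ℝ}
    {Φ : (Fin N → Fin d → ℝ) → Matrix (Fin q) (Fin q) ℝ} (hΦ : PLmatVal N d q k L Φ)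
    (X Y : Fin N → Fin d → ℝ) (a b : Fin q) :
    |Φ X a b - Φ Y a b| ≤
      L * (1 + (frobF X / Real.sqrt N) ^ (k - 1) + (frobF Y / Real.sqrt N) ^ (k - 1)) *
        (frobF (fun i j => X i j - Y i j) / Real.sqrt N) := by
  have h1 : |Φ X a b - Φ Y a b| = |(Φ X - Φ Y) a b| := by rw [Matrix.sub_apply]
  rw [h1]
  exact (abs_entry_le_frobM _ a b).trans (hΦ X Y)

lemma continuous_PL_entry {N d q k : ℕ} {L : ℝ}
    {Φ : (Fin N → Fin d → ℝ) → Matrix (Fin q) (Fin q) ℝ} (hΦ : PLmatVal N d q k L Φ)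
    (a b : Fin q) : Continuous fun X => Φ X a b := by
  rw [continuous_iff_continuousAt]
  intro X₀
  have hsub : Continuous fun X : Fin N → Fin d → ℝ => frobF (fun i j => X i j - X₀ i j) := by
    apply continuous_frobF.comp
    exact continuous_pi fun i => continuous_pi fun j =>
      (continuous_apply_apply i j).sub continuous_const
  set g : (Fin N → Fin d → ℝ) → ℝ := fun X =>
    L * (1 + (frobF X / Real.sqrt N) ^ (k - 1) + (frobF X₀ / Real.sqrt N) ^ (k - 1)) *
      (frobF (fun i j => X i j - X₀ i j) / Real.sqrt N) with hg
  have hgc : Continuous g :=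
    (continuous_const.mul ((continuous_const.add
      ((continuous_frobF.div_const _).pow _)).add continuous_const)).mul
      (hsub.div_const _)
  have hg0 : g X₀ = 0 := by
    have h0 : frobF (fun i j => X₀ i j - X₀ i j) = 0 := by simp [frobF]
    rw [hg]
    simp only [h0, zero_div, mul_zero]
  have key : ∀ X, ‖Φ X a b - Φ X₀ a b‖ ≤ g X := fun X => by
    simpa [Real.norm_eq_abs] using PL_entry_bound hΦ X X₀ a b
  have hten : Filter.Tendsto (fun X => Φ X a b - Φ X₀ a b) (nhds X₀) (nhds 0) :=
    squeeze_zero_norm key (by simpa [hg0] using (hgc.tendsto X₀))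
  have h2 := hten.add_const (Φ X₀ a b)
  simp only [zero_add, sub_add_cancel] at h2
  exact h2

lemma integrable_pow_gaussian (m : ℕ) :
    Integrable (fun x : ℝ => x ^ m) (gaussianReal 0 1) := by
  rw [gaussianReal_of_var_ne_zero _ one_ne_zero,
    integrable_withDensity_iff (measurable_gaussianPDF 0 1)
      (Filter.Eventually.of_forall fun x => ENNReal.ofReal_lt_top)]
  have base : Integrable (fun x : ℝ => x ^ (m : ℝ) * Real.exp (-(1/2) * x ^ 2)) :=
    integrable_rpow_mul_exp_neg_mul_sq (by norm_num)
      (by exact_mod_cast neg_one_lt_zero.trans_le (Nat.cast_nonneg m))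
  have : Integrable
      (fun x : ℝ => (Real.sqrt (2 * Real.pi * 1))⁻¹ * (x ^ (m : ℝ) * Real.exp (-(1/2) * x ^ 2))) :=
    base.const_mul _
  refine this.congr (Filter.Eventually.of_forall fun x => ?_)
  simp only [gaussianPDF_def]
  rw [ENNReal.toReal_ofReal (gaussianPDFReal_nonneg 0 1 x)]
  simp only [gaussianPDFReal, Real.rpow_natCast]
  push_cast
  ring_nf

lemma pi_map_eval {ι : Type*} [Fintype ι] [DecidableEq ι] {α : ι → Type*}
    [∀ i, MeasurableSpace (α i)] (μ : ∀ i, Measure (α i)) [∀ i, IsProbabilityMeasure (μ i)]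
    (i : ι) : (Measure.pi μ).map (Function.eval i) = μ i := by
  ext s hs
  rw [Measure.map_apply (measurable_pi_apply i) hs, Set.eval_preimage, Measure.pi_pi]
  rw [Fintype.prod_eq_single i (fun j hj => by
    rw [Function.update_of_ne hj]; exact measure_univ)]
  rw [Function.update_self]

instance (N d : ℕ) : IsProbabilityMeasure (stdGaussianMatrix N d) := by
  rw [stdGaussianMatrix]; infer_instance

lemma stdGaussianMatrix_map_coord (N d : ℕ) (i : Fin N) (l : Fin d) :
    (stdGaussianMatrix N d).map (fun z => z i l) = gaussianReal 0 1 := by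
  have h1 : (stdGaussianMatrix N d).map (Function.eval i)
      = Measure.pi fun _ : Fin d => gaussianReal 0 1 := pi_map_eval _ i
  have h2 : (fun z : Fin N → Fin d → ℝ => z i l)
      = (Function.eval l ∘ Function.eval i : (Fin N → Fin d → ℝ) → ℝ) := rfl
  rw [h2, ← Measure.map_map (measurable_pi_apply l) (measurable_pi_apply i), h1,
    pi_map_eval _ l]

lemma integrable_coord_pow (N d m : ℕ) (i : Fin N) (l : Fin d) :
    Integrable (fun z : Fin N → Fin d → ℝ => (z i l) ^ m) (stdGaussianMatrix N d) := by
  have hmeas : Measurable (fun z : Fin N → Fin d → ℝ => z i l) :=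
    (measurable_pi_apply l).comp (measurable_pi_apply i)
  have h := stdGaussianMatrix_map_coord N d i l
  have h3 : Integrable (fun x : ℝ => x ^ m) ((stdGaussianMatrix N d).map (fun z => z i l)) := by
    rw [h]; exact integrable_pow_gaussian m
  exact (integrable_map_measure (by rw [h]; exact (measurable_id.pow_const m).aestronglyMeasurable)
    hmeas.aemeasurable).mp h3

lemma integral_coord_pow (N d m : ℕ) (i : Fin N) (l : Fin d) :
    ∫ z, (z i l) ^ m ∂(stdGaussianMatrix N d) = ∫ x, x ^ m ∂(gaussianReal 0 1) := by
  have hmeas : Measurable (fun z : Fin N → Fin d → ℝ => z i l) :=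
    (measurable_pi_apply l).comp (measurable_pi_apply i)
  rw [← stdGaussianMatrix_map_coord N d i l,
    integral_map hmeas.aemeasurable (by
      rw [stdGaussianMatrix_map_coord N d i l]
      exact (measurable_id.pow_const m).aestronglyMeasurable)]

/-- The `2m`-th moment of the standard Gaussian. -/
def gmom (m : ℕ) : ℝ := ∫ x, x ^ (2 * m) ∂(gaussianReal 0 1)

lemma gmom_nonneg (m : ℕ) : 0 ≤ gmom m :=
  integral_nonneg fun x => (even_two_mul m).pow_nonneg x
lemma integrable_sumpow (N d m : ℕ) :
    Integrable (fun z : Fin N → Fin d → ℝ => ∑ i, ∑ l, (z i l) ^ (2 * m))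
      (stdGaussianMatrix N d) :=
  integrable_finset_sum _ fun i _ => integrable_finset_sum _ fun l _ =>
    integrable_coord_pow N d (2 * m) i l

lemma integral_sumpow (N d m : ℕ) :
    ∫ z, (∑ i, ∑ l, (z i l) ^ (2 * m)) ∂(stdGaussianMatrix N d)
      = (N : ℝ) * d * gmom m := by
  rw [integral_finset_sum _ fun i _ => integrable_finset_sum _ fun l _ =>
    integrable_coord_pow N d (2 * m) i l]
  have hcol : ∀ i : Fin N, ∫ z, (∑ l, (z i l) ^ (2 * m)) ∂(stdGaussianMatrix N d)
      = (d : ℝ) * gmom m := by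
    intro i
    rw [integral_finset_sum _ fun l _ => integrable_coord_pow N d (2 * m) i l]
    calc ∑ l : Fin d, ∫ z, (z i l) ^ (2 * m) ∂(stdGaussianMatrix N d)
        = ∑ _l : Fin d, gmom m :=
          Finset.sum_congr rfl fun l _ => integral_coord_pow N d (2 * m) i l
      _ = (d : ℝ) * gmom m := by
          simp [Finset.sum_const]
  calc ∑ i : Fin N, ∫ z, (∑ l, (z i l) ^ (2 * m)) ∂(stdGaussianMatrix N d)
      = ∑ _i : Fin N, (d : ℝ) * gmom m := Finset.sum_congr rfl fun i _ => hcol i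
    _ = (N : ℝ) * d * gmom m := by
        simp [Finset.sum_const]
        ring

lemma continuous_Fspow (N d j : ℕ) :
    Continuous (fun z : Fin N → Fin d → ℝ => (frobF z / Real.sqrt N) ^ j) :=
  (continuous_frobF.div_const _).pow j

lemma Fs_nonneg {N d : ℕ} (z : Fin N → Fin d → ℝ) : 0 ≤ frobF z / Real.sqrt N :=
  div_nonneg (frobF_nonneg z) (Real.sqrt_nonneg _)

lemma moment_bound (N d m : ℕ) (hN : 1 ≤ N) (hd : 1 ≤ d) :
    Integrable (fun z : Fin N → Fin d → ℝ => (frobF z / Real.sqrt N) ^ (2 * m))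
        (stdGaussianMatrix N d) ∧
      ∫ z, (frobF z / Real.sqrt N) ^ (2 * m) ∂(stdGaussianMatrix N d)
        ≤ (d : ℝ) ^ m * gmom m := by
  have hNpos : (0 : ℝ) < N := by exact_mod_cast hN
  have hdpos : (0 : ℝ) < d := by exact_mod_cast hd
  rcases Nat.eq_zero_or_pos m with hm | hm
  · subst hm
    constructor
    · simpa using integrable_const (μ := stdGaussianMatrix N d) (1 : ℝ)
    · have h1 : gmom 0 = 1 := by
        rw [gmom]
        simp
      simp [h1]
  · obtain ⟨m', rfl⟩ : ∃ m', m = m' + 1 := ⟨m - 1, (Nat.succ_pred_eq_of_pos hm).symm⟩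
    set c : ℝ := ((N : ℝ) * d) ^ m' / (N : ℝ) ^ (m' + 1) with hc
    have hcpos : 0 < c := by positivity
    have hpt : ∀ z : Fin N → Fin d → ℝ,
        (frobF z / Real.sqrt N) ^ (2 * (m' + 1))
          ≤ c * ∑ i, ∑ l, (z i l) ^ (2 * (m' + 1)) := by
      intro z
      have hsum : (∑ i, ∑ l, (z i l) ^ 2) = ∑ p : Fin N × Fin d, (z p.1 p.2) ^ 2 :=
        (Fintype.sum_prod_type (f := fun p : Fin N × Fin d => (z p.1 p.2) ^ 2)).symm
      have hsum2 : (∑ p : Fin N × Fin d, (z p.1 p.2) ^ (2 * (m' + 1)))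
          = ∑ i, ∑ l, (z i l) ^ (2 * (m' + 1)) :=
        Fintype.sum_prod_type (f := fun p : Fin N × Fin d => (z p.1 p.2) ^ (2 * (m' + 1)))
      have key := pow_sum_div_card_le_sum_pow (s := (Finset.univ : Finset (Fin N × Fin d)))
        (f := fun p => (z p.1 p.2) ^ 2) (fun p _ => sq_nonneg _) m'
      have hcard : ((Finset.univ : Finset (Fin N × Fin d)).card : ℝ) = (N : ℝ) * d := by
        simp [Fintype.card_prod]
      rw [hcard, div_le_iff₀ (by positivity)] at key
      have hpow : (frobF z / Real.sqrt N) ^ (2 * (m' + 1))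
          = (∑ p : Fin N × Fin d, (z p.1 p.2) ^ 2) ^ (m' + 1) / (N : ℝ) ^ (m' + 1) := by
        rw [div_pow, pow_mul, pow_mul, frobF_sq,
          Real.sq_sqrt (Nat.cast_nonneg N), hsum]
      have hexp : (∑ p : Fin N × Fin d, ((z p.1 p.2) ^ 2) ^ (m' + 1))
          = ∑ p : Fin N × Fin d, (z p.1 p.2) ^ (2 * (m' + 1)) := by
        simp_rw [← pow_mul]
      rw [hpow]
      rw [div_le_iff₀ (by positivity)]
      calc (∑ p : Fin N × Fin d, (z p.1 p.2) ^ 2) ^ (m' + 1)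
          ≤ (∑ p : Fin N × Fin d, ((z p.1 p.2) ^ 2) ^ (m' + 1)) * ((N : ℝ) * d) ^ m' := key
        _ = (c * ∑ i, ∑ l, (z i l) ^ (2 * (m' + 1))) * (N : ℝ) ^ (m' + 1) := by
            rw [hexp, hsum2, hc]
            field_simp
    have hint : Integrable
        (fun z : Fin N → Fin d → ℝ => (frobF z / Real.sqrt N) ^ (2 * (m' + 1)))
        (stdGaussianMatrix N d) := by
      refine Integrable.mono' ((integrable_sumpow N d (m' + 1)).const_mul c)
        (continuous_Fspow N d _).aestronglyMeasurable
        (Filter.Eventually.of_forall fun z => ?_)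
      rw [Real.norm_eq_abs, abs_of_nonneg (pow_nonneg (Fs_nonneg z) _)]
      exact hpt z
    refine ⟨hint, ?_⟩
    calc ∫ z, (frobF z / Real.sqrt N) ^ (2 * (m' + 1)) ∂(stdGaussianMatrix N d)
        ≤ ∫ z, c * ∑ i, ∑ l, (z i l) ^ (2 * (m' + 1)) ∂(stdGaussianMatrix N d) :=
          integral_mono hint ((integrable_sumpow N d (m' + 1)).const_mul c) hpt
      _ = c * ((N : ℝ) * d * gmom (m' + 1)) := by
          rw [integral_const_mul, integral_sumpow]
      _ ≤ (d : ℝ) ^ (m' + 1) * gmom (m' + 1) := by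
          rw [hc]
          have : ((N : ℝ) * d) ^ m' / (N : ℝ) ^ (m' + 1) * ((N : ℝ) * d * gmom (m' + 1))
              = (d : ℝ) ^ (m' + 1) * gmom (m' + 1) := by
            field_simp
            ring
          rw [this]

lemma pow_le_one_add_pow {s : ℝ} (hs : 0 ≤ s) (j : ℕ) : s ^ j ≤ 1 + s ^ (2 * j) := by
  rcases le_total s 1 with h | h
  · have h1 : s ^ j ≤ 1 := pow_le_one₀ hs h
    have h2 : 0 ≤ s ^ (2 * j) := pow_nonneg hs _
    linarith
  · have h1 : s ^ j ≤ s ^ (2 * j) :=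
      pow_le_pow_right₀ h (by omega)
    linarith

lemma Fs_pow_bound (N d j : ℕ) (hN : 1 ≤ N) (hd : 1 ≤ d) :
    Integrable (fun z : Fin N → Fin d → ℝ => (frobF z / Real.sqrt N) ^ j)
        (stdGaussianMatrix N d) ∧
      ∫ z, (frobF z / Real.sqrt N) ^ j ∂(stdGaussianMatrix N d)
        ≤ 1 + (d : ℝ) ^ j * gmom j := by
  obtain ⟨hint2, hbd2⟩ := moment_bound N d j hN hd
  have dom : Integrable
      (fun z : Fin N → Fin d → ℝ => 1 + (frobF z / Real.sqrt N) ^ (2 * j))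
      (stdGaussianMatrix N d) := (integrable_const 1).add hint2
  have hpt : ∀ z : Fin N → Fin d → ℝ,
      (frobF z / Real.sqrt N) ^ j ≤ 1 + (frobF z / Real.sqrt N) ^ (2 * j) :=
    fun z => pow_le_one_add_pow (Fs_nonneg z) j
  have hint : Integrable (fun z : Fin N → Fin d → ℝ => (frobF z / Real.sqrt N) ^ j)
      (stdGaussianMatrix N d) := by
    refine Integrable.mono' dom (continuous_Fspow N d j).aestronglyMeasurable
      (Filter.Eventually.of_forall fun z => ?_)
    rw [Real.norm_eq_abs, abs_of_nonneg (pow_nonneg (Fs_nonneg z) _)]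
    exact hpt z
  refine ⟨hint, ?_⟩
  calc ∫ z, (frobF z / Real.sqrt N) ^ j ∂(stdGaussianMatrix N d)
      ≤ ∫ z, (1 + (frobF z / Real.sqrt N) ^ (2 * j)) ∂(stdGaussianMatrix N d) :=
        integral_mono hint dom hpt
    _ = 1 + ∫ z, (frobF z / Real.sqrt N) ^ (2 * j) ∂(stdGaussianMatrix N d) := by
        rw [integral_add (integrable_const 1) hint2]
        simp
    _ ≤ 1 + (d : ℝ) ^ j * gmom j := by linarith

section PLint

variable {N d q k : ℕ} {L : ℝ}
  {Φ : (Fin N → Fin d → ℝ) → Matrix (Fin q) (Fin q) ℝ}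

lemma continuous_PL_comp (hΦ : PLmatVal N d q k L Φ) (A : Fin d → Fin d → ℝ) (a b : Fin q) :
    Continuous (fun z : Fin N → Fin d → ℝ => Φ (fun i j => ∑ l, z i l * A l j) a b) := by
  apply (continuous_PL_entry hΦ a b).comp
  exact continuous_pi fun i => continuous_pi fun j => continuous_finset_sum _ fun l _ =>
    (continuous_apply_apply i l).mul continuous_const

lemma frobF_zero {N d : ℕ} : frobF (0 : Fin N → Fin d → ℝ) = 0 := by simp [frobF]

lemma Fs_comp_le (hN : 1 ≤ N) (z : Fin N → Fin d → ℝ) (A : Fin d → Fin d → ℝ) :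
    frobF (fun i j => ∑ l, z i l * A l j) / Real.sqrt N
      ≤ frobF A * (frobF z / Real.sqrt N) := by
  have h1 : frobF (fun i j => ∑ l, z i l * A l j) ≤ frobF z * frobF A := frobF_mul_le z A
  have h2 : (0:ℝ) < Real.sqrt N := Real.sqrt_pos.mpr (by exact_mod_cast hN)
  rw [div_le_iff₀ h2]
  calc frobF (fun i j => ∑ l, z i l * A l j) ≤ frobF z * frobF A := h1
    _ = frobF A * (frobF z / Real.sqrt N) * Real.sqrt N := by
        field_simp

lemma integrable_PL_comp (hN : 1 ≤ N) (hd : 1 ≤ d) (hL : 0 ≤ L)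
    (hΦ : PLmatVal N d q k L Φ) (A : Fin d → Fin d → ℝ) (a b : Fin q) :
    Integrable (fun z : Fin N → Fin d → ℝ => Φ (fun i j => ∑ l, z i l * A l j) a b)
      (stdGaussianMatrix N d) := by
  set m := k - 1 with hm
  set cA := frobF A with hcA
  have hcA0 : 0 ≤ cA := frobF_nonneg A
  have hG : Integrable (fun z : Fin N → Fin d → ℝ =>
      |Φ 0 a b| + (2 * L * cA * (frobF z / Real.sqrt N) ^ 1
        + L * cA ^ (m + 1) * (frobF z / Real.sqrt N) ^ (m + 1))) (stdGaussianMatrix N d) :=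
    (integrable_const _).add
      (((Fs_pow_bound N d 1 hN hd).1.const_mul _).add
        ((Fs_pow_bound N d (m + 1) hN hd).1.const_mul _))
  refine Integrable.mono' hG (continuous_PL_comp hΦ A a b).aestronglyMeasurable
    (Filter.Eventually.of_forall fun z => ?_)
  set X : Fin N → Fin d → ℝ := fun i j => ∑ l, z i l * A l j with hX
  have hbd := PL_entry_bound hΦ X 0 a b
  have hsub : (fun i j => X i j - (0 : Fin N → Fin d → ℝ) i j) = X := by
    funext i j; simp
  rw [hsub, frobF_zero] at hbd
  have hXle : frobF X / Real.sqrt N ≤ cA * (frobF z / Real.sqrt N) := Fs_comp_le hN z A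
  have hFs0 : 0 ≤ frobF z / Real.sqrt N := Fs_nonneg z
  have hX0 : 0 ≤ frobF X / Real.sqrt N := Fs_nonneg X
  have h0m : ((0:ℝ) / Real.sqrt N) ^ m ≤ 1 := by
    rw [zero_div]
    exact pow_le_one₀ le_rfl zero_le_one
  have step1 : |Φ X a b - Φ 0 a b| ≤
      L * (1 + (cA * (frobF z / Real.sqrt N)) ^ m + 1) * (cA * (frobF z / Real.sqrt N)) := by
    refine hbd.trans ?_
    have h1 : (frobF X / Real.sqrt N) ^ m ≤ (cA * (frobF z / Real.sqrt N)) ^ m :=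
      pow_le_pow_left₀ hX0 hXle m
    have h2 : 0 ≤ (cA * (frobF z / Real.sqrt N)) ^ m := pow_nonneg (by positivity) m
    gcongr
  have htri : |Φ X a b| ≤ |Φ 0 a b| + |Φ X a b - Φ 0 a b| := by
    have := abs_sub_abs_le_abs_sub (Φ X a b) (Φ 0 a b)
    linarith [abs_sub_comm (Φ X a b) (Φ 0 a b)]
  rw [Real.norm_eq_abs]
  have hring : L * (1 + (cA * (frobF z / Real.sqrt N)) ^ m + 1) * (cA * (frobF z / Real.sqrt N))
      = 2 * L * cA * (frobF z / Real.sqrt N) ^ 1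
        + L * cA ^ (m + 1) * (frobF z / Real.sqrt N) ^ (m + 1) := by
    rw [mul_pow]
    ring
  calc |Φ X a b| ≤ |Φ 0 a b| + |Φ X a b - Φ 0 a b| := htri
    _ ≤ |Φ 0 a b| + (2 * L * cA * (frobF z / Real.sqrt N) ^ 1
        + L * cA ^ (m + 1) * (frobF z / Real.sqrt N) ^ (m + 1)) := by
      have := step1.trans_eq hring
      linarith

end PLint

def Kbd (d k : ℕ) (C : ℝ) : ℝ :=
  (1 + (d : ℝ) ^ 1 * gmom 1)
    + 2 * C ^ (k - 1) * (1 + (d : ℝ) ^ (k - 1 + 1) * gmom (k - 1 + 1))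

lemma Kbd_nonneg (d k : ℕ) {C : ℝ} (hC : 0 ≤ C) : 0 ≤ Kbd d k C :=
  add_nonneg
    (add_nonneg zero_le_one (mul_nonneg (by positivity) (gmom_nonneg 1)))
    (mul_nonneg (by positivity)
      (add_nonneg zero_le_one (mul_nonneg (by positivity) (gmom_nonneg _))))

section EntryDiff

variable {N d q k : ℕ} {L : ℝ}
  {Φ : (Fin N → Fin d → ℝ) → Matrix (Fin q) (Fin q) ℝ}

lemma entry_diff_bound (hN : 1 ≤ N) (hd : 1 ≤ d) (hL : 0 ≤ L) (hΦ : PLmatVal N d q k L Φ)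
    {A A' : Fin d → Fin d → ℝ} {C : ℝ} (hC : 0 ≤ C) (hA : frobF A ≤ C) (hA' : frobF A' ≤ C)
    (a b : Fin q) :
    |(∫ z, Φ (fun i j => ∑ l, z i l * A' l j) a b ∂(stdGaussianMatrix N d))
        - ∫ z, Φ (fun i j => ∑ l, z i l * A l j) a b ∂(stdGaussianMatrix N d)|
      ≤ L * Kbd d k C * frobF (fun l j => A' l j - A l j) := by
  set m := k - 1 with hm
  set η := frobF (fun l j => A' l j - A l j) with hη
  have hη0 : 0 ≤ η := frobF_nonneg _
  have hintA' := integrable_PL_comp hN hd hL hΦ A' a b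
  have hintA := integrable_PL_comp hN hd hL hΦ A a b
  have hGint : Integrable (fun z : Fin N → Fin d → ℝ =>
      L * η * ((frobF z / Real.sqrt N) ^ 1
        + 2 * C ^ m * (frobF z / Real.sqrt N) ^ (m + 1))) (stdGaussianMatrix N d) :=
    (((Fs_pow_bound N d 1 hN hd).1.add
      ((Fs_pow_bound N d (m + 1) hN hd).1.const_mul _))).const_mul _
  have hpt : ∀ z : Fin N → Fin d → ℝ,
      |Φ (fun i j => ∑ l, z i l * A' l j) a b - Φ (fun i j => ∑ l, z i l * A l j) a b|
        ≤ L * η * ((frobF z / Real.sqrt N) ^ 1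
            + 2 * C ^ m * (frobF z / Real.sqrt N) ^ (m + 1)) := by
    intro z
    set X' : Fin N → Fin d → ℝ := fun i j => ∑ l, z i l * A' l j with hX'
    set X : Fin N → Fin d → ℝ := fun i j => ∑ l, z i l * A l j with hX
    have hbd := PL_entry_bound hΦ X' X a b
    have hXX : (fun i j => X' i j - X i j)
        = fun (i : Fin N) (j : Fin d) => ∑ l, z i l * (A' l j - A l j) := by
      funext i j
      rw [hX', hX]
      rw [← Finset.sum_sub_distrib]
      exact Finset.sum_congr rfl fun l _ => (mul_sub _ _ _).symm
    rw [hXX] at hbd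
    have hFs0 : 0 ≤ frobF z / Real.sqrt N := Fs_nonneg z
    have hsuble : frobF (fun (i : Fin N) (j : Fin d) => ∑ l, z i l * (A' l j - A l j))
          / Real.sqrt N ≤ η * (frobF z / Real.sqrt N) :=
      Fs_comp_le hN z _
    have hX'le : frobF X' / Real.sqrt N ≤ C * (frobF z / Real.sqrt N) :=
      (Fs_comp_le hN z A').trans (by gcongr)
    have hXle : frobF X / Real.sqrt N ≤ C * (frobF z / Real.sqrt N) :=
      (Fs_comp_le hN z A).trans (by gcongr)
    have hstep : |Φ X' a b - Φ X a b| ≤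
        L * (1 + (C * (frobF z / Real.sqrt N)) ^ m + (C * (frobF z / Real.sqrt N)) ^ m)
          * (η * (frobF z / Real.sqrt N)) := by
      refine hbd.trans ?_
      have h1 : (frobF X' / Real.sqrt N) ^ m ≤ (C * (frobF z / Real.sqrt N)) ^ m :=
        pow_le_pow_left₀ (Fs_nonneg X') hX'le m
      have h2 : (frobF X / Real.sqrt N) ^ m ≤ (C * (frobF z / Real.sqrt N)) ^ m :=
        pow_le_pow_left₀ (Fs_nonneg X) hXle m
      gcongr
      exact div_nonneg (frobF_nonneg _) (Real.sqrt_nonneg _)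
    refine hstep.trans_eq ?_
    rw [mul_pow]
    ring
  have habs : |(∫ z, Φ (fun i j => ∑ l, z i l * A' l j) a b ∂(stdGaussianMatrix N d))
      - ∫ z, Φ (fun i j => ∑ l, z i l * A l j) a b ∂(stdGaussianMatrix N d)|
      ≤ ∫ z, |Φ (fun i j => ∑ l, z i l * A' l j) a b
          - Φ (fun i j => ∑ l, z i l * A l j) a b| ∂(stdGaussianMatrix N d) := by
    rw [← integral_sub hintA' hintA]
    simpa [Real.norm_eq_abs] using
      norm_integral_le_integral_norm (μ := stdGaussianMatrix N d)
        (f := fun z => Φ (fun i j => ∑ l, z i l * A' l j) a b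
          - Φ (fun i j => ∑ l, z i l * A l j) a b)
  have hmono : ∫ z, |Φ (fun i j => ∑ l, z i l * A' l j) a b
        - Φ (fun i j => ∑ l, z i l * A l j) a b| ∂(stdGaussianMatrix N d)
      ≤ ∫ z, L * η * ((frobF z / Real.sqrt N) ^ 1
          + 2 * C ^ m * (frobF z / Real.sqrt N) ^ (m + 1)) ∂(stdGaussianMatrix N d) :=
    integral_mono (hintA'.sub hintA).abs hGint hpt
  have hval : ∫ z, L * η * ((frobF z / Real.sqrt N) ^ 1
        + 2 * C ^ m * (frobF z / Real.sqrt N) ^ (m + 1)) ∂(stdGaussianMatrix N d)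
      = L * η * ((∫ z, (frobF z / Real.sqrt N) ^ 1 ∂(stdGaussianMatrix N d))
          + 2 * C ^ m * ∫ z, (frobF z / Real.sqrt N) ^ (m + 1) ∂(stdGaussianMatrix N d)) := by
    rw [integral_const_mul, integral_add (Fs_pow_bound N d 1 hN hd).1
      ((Fs_pow_bound N d (m + 1) hN hd).1.const_mul _), integral_const_mul]
  have hK : (∫ z, (frobF z / Real.sqrt N) ^ 1 ∂(stdGaussianMatrix N d))
        + 2 * C ^ m * ∫ z, (frobF z / Real.sqrt N) ^ (m + 1) ∂(stdGaussianMatrix N d)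
      ≤ Kbd d k C := by
    have h1 := (Fs_pow_bound N d 1 hN hd).2
    have h2 := (Fs_pow_bound N d (m + 1) hN hd).2
    have hCm : 0 ≤ 2 * C ^ m := by positivity
    rw [Kbd]
    have := mul_le_mul_of_nonneg_left h2 hCm
    rw [hm] at *
    nlinarith [pow_one (d : ℝ)]
  calc |(∫ z, Φ (fun i j => ∑ l, z i l * A' l j) a b ∂(stdGaussianMatrix N d))
      - ∫ z, Φ (fun i j => ∑ l, z i l * A l j) a b ∂(stdGaussianMatrix N d)|
      ≤ L * η * ((∫ z, (frobF z / Real.sqrt N) ^ 1 ∂(stdGaussianMatrix N d))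
          + 2 * C ^ m * ∫ z, (frobF z / Real.sqrt N) ^ (m + 1) ∂(stdGaussianMatrix N d)) :=
        (habs.trans hmono).trans_eq hval
    _ ≤ L * η * Kbd d k C := by
        have hLη : 0 ≤ L * η := mul_nonneg hL hη0
        exact mul_le_mul_of_nonneg_left hK hLη
    _ = L * Kbd d k C * η := by ring

end EntryDiff

lemma Matrix.PosSemidef.sqrt_eq_cfc {n : Type*} [Fintype n] [DecidableEq n]
    {A : Matrix n n ℝ} (hA : A.PosSemidef) : hA.sqrt = cfc Real.sqrt A := by
  rw [hA.1.cfc_eq, Matrix.IsHermitian.cfc, Matrix.PosSemidef.sqrt]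
  simp [Function.comp_def]

lemma Matrix.PosSemidef.spectrum_nonneg' {n : Type*} [Fintype n] [DecidableEq n]
    {A : Matrix n n ℝ} (hA : A.PosSemidef) : ∀ x ∈ spectrum ℝ A, 0 ≤ x := by
  intro x hx
  obtain ⟨i, rfl⟩ := hA.1.spectrum_real_eq_range_eigenvalues ▸ hx
  exact hA.eigenvalues_nonneg i

lemma Matrix.PosSemidef.posSemidef_sqrt {n : Type*} [Fintype n] [DecidableEq n]
    {A : Matrix n n ℝ} (hA : A.PosSemidef) : hA.sqrt.PosSemidef := by
  have hD : (Matrix.diagonal (Real.sqrt ∘ hA.1.eigenvalues)).PosSemidef :=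
    Matrix.posSemidef_diagonal_iff.mpr fun i => Real.sqrt_nonneg _
  have := hD.mul_mul_conjTranspose_same (hA.1.eigenvectorUnitary.1)
  rw [Matrix.PosSemidef.sqrt, ← Matrix.star_eq_conjTranspose] at *
  exact this

lemma Matrix.PosSemidef.sqrt_mul_self {n : Type*} [Fintype n] [DecidableEq n]
    {A : Matrix n n ℝ} (hA : A.PosSemidef) : hA.sqrt * hA.sqrt = A := by
  have hsa : IsSelfAdjoint A := hA.1
  rw [hA.sqrt_eq_cfc, ← cfc_mul Real.sqrt Real.sqrt A]
  conv_rhs => rw [← cfc_id' ℝ A]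
  refine cfc_congr fun x hx => ?_
  exact Real.mul_self_sqrt (hA.spectrum_nonneg' x hx)

lemma Matrix.PosSemidef.eq_sqrt_of_sq_eq {n : Type*} [Fintype n] [DecidableEq n]
    {A B : Matrix n n ℝ} (hB : B.PosSemidef) (hA : A.PosSemidef) (h : B ^ 2 = A) :
    B = hA.sqrt := by
  have hsa : IsSelfAdjoint B := hB.1
  subst h
  rw [hA.sqrt_eq_cfc, ← cfc_comp_pow Real.sqrt 2 B]
  conv_lhs => rw [← cfc_id' ℝ B]
  refine cfc_congr fun x hx => ?_
  exact (Real.sqrt_sq (hB.spectrum_nonneg' x hx)).symm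

section SqrtCont

variable {d : ℕ}

lemma sumsq_sqrt_eq_trace {B : Matrix (Fin d) (Fin d) ℝ} (hB : B.PosSemidef) :
    ∑ i, ∑ j, (hB.sqrt i j) ^ 2 = B.trace := by
  have hs : hB.sqrt.IsHermitian := hB.posSemidef_sqrt.1
  have hmul : hB.sqrt * hB.sqrt = B := hB.sqrt_mul_self
  calc ∑ i, ∑ j, (hB.sqrt i j) ^ 2
      = ∑ i, ∑ j, hB.sqrt i j * hB.sqrt j i := by
        refine Finset.sum_congr rfl fun i _ => Finset.sum_congr rfl fun j _ => ?_
        rw [sq]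
        congr 1
        simpa using (hs.apply j i)
    _ = ∑ i, (hB.sqrt * hB.sqrt) i i := by
        refine Finset.sum_congr rfl fun i _ => ?_
        rw [Matrix.mul_apply]
    _ = B.trace := by rw [hmul, Matrix.trace]; rfl

lemma sqrt_continuity (κ : Matrix (Fin d) (Fin d) ℝ) (hκ : κ.PosSemidef) :
    ∀ ε > (0 : ℝ), ∃ δ > (0 : ℝ),
      ∀ (κ' : Matrix (Fin d) (Fin d) ℝ) (hκ' : κ'.PosSemidef),
        (∀ i j, |κ' i j - κ i j| < δ) →
        frobF (fun l j => hκ'.sqrt l j - hκ.sqrt l j) ≤ ε := by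
  intro ε hε
  by_contra hcon
  push_neg at hcon
  have H : ∀ n : ℕ, ∃ (κ' : Matrix (Fin d) (Fin d) ℝ) (hκ' : κ'.PosSemidef),
      (∀ i j, |κ' i j - κ i j| < 1 / (n + 1)) ∧
      ε < frobF (fun l j => hκ'.sqrt l j - hκ.sqrt l j) := by
    intro n
    obtain ⟨κ', hκ', hclose, hfar⟩ := hcon (1 / (n + 1)) (by positivity)
    exact ⟨κ', hκ', hclose, hfar⟩
  choose K hK1 hK2 hK3 using H
  set S : ℕ → (Fin d → Fin d → ℝ) := fun n => fun i j => (hK1 n).sqrt i j with hS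
  -- boundedness
  set T : ℝ := Real.sqrt (κ.trace + d) with hT
  have hbox : ∀ n, S n ∈ Metric.closedBall (0 : Fin d → Fin d → ℝ) T := by
    intro n
    have htr : (K n).trace ≤ κ.trace + d := by
      have : ∀ i : Fin d, K n i i ≤ κ i i + 1 := by
        intro i
        have := hK2 n i i
        have h1 : (1 : ℝ) / (n + 1) ≤ 1 := by
          rw [div_le_one (by positivity)]
          linarith [Nat.cast_nonneg (α := ℝ) n]
        have := abs_lt.mp this
        linarith [this.2]
      calc (K n).trace = ∑ i, K n i i := rfl
        _ ≤ ∑ i : Fin d, (κ i i + 1) := Finset.sum_le_sum fun i _ => this i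
        _ = κ.trace + d := by
          rw [Finset.sum_add_distrib]
          simp [Matrix.trace]
    have hsq : ∑ i, ∑ j, (S n i j) ^ 2 ≤ κ.trace + d := by
      rw [hS]
      simpa using (sumsq_sqrt_eq_trace (hK1 n)).le.trans htr
    have hentry : ∀ i j, |S n i j| ≤ T := by
      intro i j
      rw [hT, ← Real.sqrt_sq_eq_abs]
      apply Real.sqrt_le_sqrt
      calc (S n i j) ^ 2 ≤ ∑ j', (S n i j') ^ 2 :=
            Finset.single_le_sum (f := fun j' => (S n i j') ^ 2)
              (fun _ _ => sq_nonneg _) (Finset.mem_univ j)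
        _ ≤ ∑ i', ∑ j', (S n i' j') ^ 2 :=
            Finset.single_le_sum (f := fun i' => ∑ j', (S n i' j') ^ 2)
              (fun _ _ => Finset.sum_nonneg fun _ _ => sq_nonneg _) (Finset.mem_univ i)
        _ ≤ κ.trace + d := hsq
    rw [Metric.mem_closedBall, dist_zero_right]
    rw [pi_norm_le_iff_of_nonneg (Real.sqrt_nonneg _)]
    intro i
    rw [pi_norm_le_iff_of_nonneg (Real.sqrt_nonneg _)]
    intro j
    rw [Real.norm_eq_abs]
    exact hentry i j
  obtain ⟨a, _, φ, hφ, htend⟩ :=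
    tendsto_subseq_of_bounded Metric.isBounded_closedBall hbox
  -- entrywise limits
  have hconv : ∀ i j, Filter.Tendsto (fun n => S (φ n) i j) Filter.atTop (nhds (a i j)) := by
    intro i j
    have h1 := ((continuous_apply i).tendsto a).comp htend
    exact ((continuous_apply j).tendsto (a i)).comp h1
  have hφtop : Filter.Tendsto φ Filter.atTop Filter.atTop := hφ.tendsto_atTop
  have hKconv : ∀ i j, Filter.Tendsto (fun n => K (φ n) i j) Filter.atTop (nhds (κ i j)) := by
    intro i j
    have hz : Filter.Tendsto (fun n : ℕ => 1 / ((φ n : ℝ) + 1)) Filter.atTop (nhds 0) :=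
      tendsto_one_div_add_atTop_nhds_zero_nat.comp hφtop
    have hb : ∀ n, ‖K (φ n) i j - κ i j‖ ≤ 1 / ((φ n : ℝ) + 1) := fun n =>
      (le_of_lt (by simpa [Real.norm_eq_abs] using hK2 (φ n) i j))
    have := squeeze_zero_norm hb hz
    have h2 := this.add_const (κ i j)
    simpa using h2
  -- limit matrix
  set Slim : Matrix (Fin d) (Fin d) ℝ := Matrix.of a with hSlim
  have hSlimsq : Slim * Slim = κ := by
    ext i j
    have h1 : Filter.Tendsto (fun n => ∑ l, S (φ n) i l * S (φ n) l j)
        Filter.atTop (nhds (∑ l, a i l * a l j)) :=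
      tendsto_finset_sum _ fun l _ => (hconv i l).mul (hconv l j)
    have h2 : (fun n => ∑ l, S (φ n) i l * S (φ n) l j) = fun n => K (φ n) i j := by
      funext n
      have := (hK1 (φ n)).sqrt_mul_self
      calc ∑ l, S (φ n) i l * S (φ n) l j
          = ((hK1 (φ n)).sqrt * (hK1 (φ n)).sqrt) i j := (Matrix.mul_apply).symm
        _ = K (φ n) i j := by rw [this]
    rw [h2] at h1
    have := tendsto_nhds_unique h1 (hKconv i j)
    simpa [Matrix.mul_apply, hSlim] using this
  have hSlimpsd : Slim.PosSemidef := by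
    refine Matrix.PosSemidef.of_dotProduct_mulVec_nonneg ?_ ?_
    · ext i j
      have hsymm : ∀ n, S (φ n) j i = S (φ n) i j := by
        intro n
        have hs := (hK1 (φ n)).posSemidef_sqrt.1
        simpa using (hs.apply i j)
      have h1 : Filter.Tendsto (fun n => S (φ n) j i) Filter.atTop (nhds (a j i)) := hconv j i
      have h2 : Filter.Tendsto (fun n => S (φ n) j i) Filter.atTop (nhds (a i j)) := by
        simpa [funext hsymm] using hconv i j
      have := tendsto_nhds_unique h1 h2
      simpa [Matrix.conjTranspose_apply, hSlim] using this
    · intro x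
      have hterm : ∀ n, (0 : ℝ) ≤ dotProduct (star x) ((hK1 (φ n)).sqrt.mulVec x) :=
        fun n => (hK1 (φ n)).posSemidef_sqrt.dotProduct_mulVec_nonneg x
      have ht : Filter.Tendsto (fun n => dotProduct (star x) ((hK1 (φ n)).sqrt.mulVec x))
          Filter.atTop (nhds (dotProduct (star x) (Slim.mulVec x))) := by
        simp only [dotProduct, Matrix.mulVec, star_trivial]
        exact tendsto_finset_sum _ fun i _ => Filter.Tendsto.const_mul _
          (tendsto_finset_sum _ fun l _ => (hconv i l).mul_const _)
      exact ge_of_tendsto' ht hterm |>.trans_eq rfl |> fun h => h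
  have hSlimeq : Slim = hκ.sqrt := by
    refine hSlimpsd.eq_sqrt_of_sq_eq hκ ?_
    rw [pow_two]
    exact hSlimsq
  -- contradiction
  have hgt : Filter.Tendsto (fun n => frobF (fun l j => S (φ n) l j - hκ.sqrt l j))
      Filter.atTop (nhds (frobF (fun l j => a l j - hκ.sqrt l j))) := by
    have hc : Continuous fun x : Fin d → Fin d → ℝ =>
        frobF (fun l j => x l j - hκ.sqrt l j) := by
      apply continuous_frobF.comp
      exact continuous_pi fun l => continuous_pi fun j =>
        (continuous_apply_apply l j).sub continuous_const
    exact (hc.tendsto a).comp htend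
  have hzero : frobF (fun l j => a l j - hκ.sqrt l j) = 0 := by
    have : ∀ l j, a l j = hκ.sqrt l j := by
      intro l j
      rw [← hSlimeq]
      rfl
    have h0 : (fun l j => a l j - hκ.sqrt l j) = (0 : Fin d → Fin d → ℝ) := by
      funext l j
      simp [this l j]
    rw [h0, frobF_zero]
  rw [hzero] at hgt
  have : ε ≤ 0 := ge_of_tendsto' hgt fun n => (hK3 (φ n)).le
  linarith

end SqrtCont

/-- Uniform (in `N`) continuity of Gaussian expectations of uniformly pseudo-Lipschitz
matrix-valued functions with respect to the covariance:
`lim_{κ' → κ} sup_{N ≥ 1} ‖E[Φ_N(Z_κ)] − E[Φ_N(Z_{κ'})]‖ = 0`. -/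
theorem gaussExpect_uniformly_continuous_in_covariance
    (t q k : ℕ) (ht : 1 ≤ t) (hq : 1 ≤ q) (L : ℝ) (hL : 0 ≤ L)
    (Φ : ∀ N : ℕ, (Fin N → Fin (t * q) → ℝ) → Matrix (Fin q) (Fin q) ℝ)
    (hΦ : ∀ N, PLmatVal N (t * q) q k L (Φ N))
    (κ : Matrix (Fin (t * q)) (Fin (t * q)) ℝ) (hκ : κ.PosSemidef) :
    ∀ ε > (0 : ℝ), ∃ δ > (0 : ℝ),
      ∀ (κ' : Matrix (Fin (t * q)) (Fin (t * q)) ℝ) (hκ' : κ'.PosSemidef),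
        (∀ i j, |κ' i j - κ i j| < δ) →
        ∀ N : ℕ, 1 ≤ N →
          frobM (gaussExpect (Φ N) hκ' - gaussExpect (Φ N) hκ) ≤ ε := by
  intro ε hε
  have hd : 1 ≤ t * q := by
    calc 1 = 1 * 1 := by norm_num
    _ ≤ t * q := Nat.mul_le_mul ht hq
  set C : ℝ := Real.sqrt (κ.trace + (t * q)) with hCdef
  have hC : 0 ≤ C := Real.sqrt_nonneg _
  set P : ℝ := (q : ℝ) * (L * Kbd (t * q) k C) with hP
  have hP0 : 0 ≤ P := by
    have := Kbd_nonneg (t * q) k hC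
    positivity
  set ε' : ℝ := ε / (P + 1) with hε'def
  have hε' : 0 < ε' := by positivity
  obtain ⟨δ₀, hδ₀, hδ₀prop⟩ := sqrt_continuity κ hκ ε' hε'
  refine ⟨min δ₀ 1, by positivity, ?_⟩
  intro κ' hκ' hclose N hN
  have hclose₀ : ∀ i j, |κ' i j - κ i j| < δ₀ :=
    fun i j => (hclose i j).trans_le (min_le_left _ _)
  have hclose₁ : ∀ i j, |κ' i j - κ i j| < 1 :=
    fun i j => (hclose i j).trans_le (min_le_right _ _)
  have hη : frobF (fun l j => hκ'.sqrt l j - hκ.sqrt l j) ≤ ε' :=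
    hδ₀prop κ' hκ' hclose₀
  -- bounds on the square roots
  have htr' : κ'.trace ≤ κ.trace + (t * q) := by
    have hdiag : ∀ i : Fin (t * q), κ' i i ≤ κ i i + 1 := by
      intro i
      have := abs_lt.mp (hclose₁ i i)
      linarith [this.2]
    calc κ'.trace = ∑ i, κ' i i := rfl
      _ ≤ ∑ i : Fin (t * q), (κ i i + 1) := Finset.sum_le_sum fun i _ => hdiag i
      _ = κ.trace + (t * q) := by
        rw [Finset.sum_add_distrib]
        simp [Matrix.trace]
  have hA : frobF (fun l j => hκ.sqrt l j) ≤ C := by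
    rw [frobF, hCdef]
    apply Real.sqrt_le_sqrt
    have : ∑ i, ∑ j, (hκ.sqrt i j) ^ 2 = κ.trace := sumsq_sqrt_eq_trace hκ
    rw [this]
    have : (0:ℝ) ≤ (t : ℝ) * (q : ℝ) := by positivity
    linarith
  have hA' : frobF (fun l j => hκ'.sqrt l j) ≤ C := by
    rw [frobF, hCdef]
    apply Real.sqrt_le_sqrt
    have := sumsq_sqrt_eq_trace hκ'
    rw [this]
    exact htr'
  -- entrywise bound
  have hB : 0 ≤ L * Kbd (t * q) k C * ε' := by
    have := Kbd_nonneg (t * q) k hC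
    positivity
  have hentry : ∀ a b : Fin q,
      |(gaussExpect (Φ N) hκ' - gaussExpect (Φ N) hκ) a b| ≤ L * Kbd (t * q) k C * ε' := by
    intro a b
    have heq : (gaussExpect (Φ N) hκ' - gaussExpect (Φ N) hκ) a b
        = (∫ z, Φ N (fun i j => ∑ l, z i l * hκ'.sqrt l j) a b ∂(stdGaussianMatrix N (t * q)))
          - ∫ z, Φ N (fun i j => ∑ l, z i l * hκ.sqrt l j) a b ∂(stdGaussianMatrix N (t * q)) := by
      rw [Matrix.sub_apply]
      rfl
    rw [heq]
    have hbd := entry_diff_bound hN hd hL (hΦ N)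
      (A := fun l j => hκ.sqrt l j) (A' := fun l j => hκ'.sqrt l j) hC hA hA' a b
    calc |(∫ z, Φ N (fun i j => ∑ l, z i l * hκ'.sqrt l j) a b ∂(stdGaussianMatrix N (t * q)))
        - ∫ z, Φ N (fun i j => ∑ l, z i l * hκ.sqrt l j) a b ∂(stdGaussianMatrix N (t * q))|
        ≤ L * Kbd (t * q) k C * frobF (fun l j => hκ'.sqrt l j - hκ.sqrt l j) := hbd
      _ ≤ L * Kbd (t * q) k C * ε' := by
          have := Kbd_nonneg (t * q) k hC
          have hLK : 0 ≤ L * Kbd (t * q) k C := by positivity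
          exact mul_le_mul_of_nonneg_left hη hLK
  have hfrob : frobM (gaussExpect (Φ N) hκ' - gaussExpect (Φ N) hκ)
      ≤ (q : ℝ) * (L * Kbd (t * q) k C * ε') :=
    frobM_le_of_entries _ hB hentry
  refine hfrob.trans ?_
  have hPe : (q : ℝ) * (L * Kbd (t * q) k C * ε') = P * ε' := by rw [hP]; ring
  rw [hPe, hε'def]
  rw [div_eq_mul_inv]
  have hP1 : (0:ℝ) < P + 1 := by linarith
  calc P * (ε * (P + 1)⁻¹) = ε * (P / (P + 1)) := by ring
    _ ≤ ε * 1 := by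
        apply mul_le_mul_of_nonneg_left _ hε.le
        rw [div_le_one hP1]
        linarith
    _ = ε := mul_one ε
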